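/- arXiv:2203.09677 — 2 statements merged into one kernel-verified Lean document; each statement's English description precedes it below -/
import Mathlib

section
/- For a stationary Markov measure μ on {0,1}^ℕ with positive transition matrix P, the Haar functions e_{[x]} (as defined below) are pairwise orthogonal in L²(μ): if x and y are distinct finite words then ∫ e_{[x]} e_{[y]} dμ = 0. -/
open MeasureTheory Real Filter

abbrev Omega (d : ℕ) := ℕ → Fin d

def shift {d : ℕ} (x : Omega d) : Omega d := fun n => x (n + 1)

def cons {d : ℕ} (a : Fin d) (x : Omega d) : Omega d := fun n =>
  match n with
  | 0 => a
  | Nat.succ k => x k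

def Ruelle {d : ℕ} (J : Omega d → ℝ) (f : Omega d → ℝ) (x : Omega d) : ℝ :=
  ∑ a : Fin d, J (cons a x) * f (cons a x)

def IsJacobian {d : ℕ} (J : Omega d → ℝ) : Prop :=
  Continuous J ∧ (∀ x, 0 < J x ∧ J x < 1) ∧ ∀ x, Ruelle J (fun _ => 1) x = 1

def IsGibbs {d : ℕ} (J : Omega d → ℝ) (μ : Measure (Omega d)) : Prop :=
  IsProbabilityMeasure μ ∧
    ∀ f : Omega d → ℝ, Continuous f → ∫ x, Ruelle J f x ∂μ = ∫ x, f x ∂μ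

def Cyl (w : List (Fin 2)) : Set (Omega 2) := {x | ∀ i, i < w.length → x i = w.getD i 0}

def Sh (y : Omega 2) : Omega 2 := cons 0 (shift y)

def chainProd (P : Fin 2 → Fin 2 → ℝ) : Fin 2 → List (Fin 2) → ℝ
  | _, [] => 1
  | a, b :: t => P a b * chainProd P b t

def markovWeight (pi : Fin 2 → ℝ) (P : Fin 2 → Fin 2 → ℝ) : List (Fin 2) → ℝ
  | [] => 1
  | a :: t => pi a * chainProd P a t

noncomputable def haarFun (μ : Measure (Omega 2)) (P : Fin 2 → Fin 2 → ℝ)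
    (w : List (Fin 2)) : Omega 2 → ℝ := fun y =>
  let l := w.getLast!
  (1 / Real.sqrt ((μ (Cyl w)).toReal)) *
    (Real.sqrt (P l 1 / P l 0) * Set.indicator (Cyl (w ++ [0])) (fun _ => (1 : ℝ)) y -
      Real.sqrt (P l 0 / P l 1) * Set.indicator (Cyl (w ++ [1])) (fun _ => (1 : ℝ)) y)

/-! ### Auxiliary lemmas -/

lemma measurableSet_cyl (w : List (Fin 2)) : MeasurableSet (Cyl w) := by
  have h : Cyl w = ⋂ i ∈ Finset.range w.length, (fun x : Omega 2 => x i) ⁻¹' {w.getD i 0} := by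
    ext x
    simp [Cyl, Set.mem_iInter]
  rw [h]
  exact MeasurableSet.biInter (Set.to_countable _)
    (fun i _ => (measurable_pi_apply i) (MeasurableSet.singleton _))

lemma cyl_inter_of_prefix {u v : List (Fin 2)} (hlen : u.length ≤ v.length)
    (hag : ∀ i < u.length, u.getD i 0 = v.getD i 0) : Cyl u ∩ Cyl v = Cyl v := by
  apply Set.inter_eq_self_of_subset_right
  intro x hx i hi
  rw [hag i hi]
  exact hx i (lt_of_lt_of_le hi hlen)

lemma cyl_inter_empty {u v : List (Fin 2)} (i : ℕ) (hiu : i < u.length) (hiv : i < v.length)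
    (hne : u.getD i 0 ≠ v.getD i 0) : Cyl u ∩ Cyl v = ∅ := by
  ext x
  simp only [Set.mem_inter_iff, Set.mem_empty_iff_false, iff_false]
  rintro ⟨hu, hv⟩
  exact hne ((hu i hiu).symm.trans (hv i hiv))

lemma chainProd_snoc (P : Fin 2 → Fin 2 → ℝ) (a b : Fin 2) (t : List (Fin 2)) :
    chainProd P a (t ++ [b]) = chainProd P a t * P ((a :: t).getLast!) b := by
  induction t generalizing a with
  | nil => simp [chainProd, List.getLast!]
  | cons c s ih =>
      have h : ((a :: c :: s).getLast!) = ((c :: s).getLast!) := by simp [List.getLast!]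
      show P a c * chainProd P c (s ++ [b]) = chainProd P a (c :: s) * P ((a :: c :: s).getLast!) b
      rw [ih c, h]
      simp only [chainProd]
      ring

lemma markovWeight_snoc (pi : Fin 2 → ℝ) (P : Fin 2 → Fin 2 → ℝ) (w : List (Fin 2))
    (hw : w ≠ []) (b : Fin 2) :
    markovWeight pi P (w ++ [b]) = markovWeight pi P w * P w.getLast! b := by
  obtain ⟨a, t, rfl⟩ := List.exists_cons_of_ne_nil hw
  simp only [List.cons_append, markovWeight, chainProd_snoc]
  ring

lemma sqrt_cancel {p0 p1 : ℝ} (h0 : 0 < p0) (h1 : 0 < p1) :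
    Real.sqrt (p1 / p0) * p0 = Real.sqrt (p0 / p1) * p1 := by
  have e0 : p1 / p0 = p1 * p0 / p0 ^ 2 := by field_simp
  have e1 : p0 / p1 = p0 * p1 / p1 ^ 2 := by field_simp
  rw [e0, e1, Real.sqrt_div (by positivity), Real.sqrt_div (by positivity),
    Real.sqrt_sq h0.le, Real.sqrt_sq h1.le, div_mul_cancel₀ _ h0.ne', div_mul_cancel₀ _ h1.ne',
    mul_comm p1 p0]

lemma integral_haar_mul (μ : Measure (Omega 2)) [IsProbabilityMeasure μ]
    (P : Fin 2 → Fin 2 → ℝ) (w w' : List (Fin 2)) :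
    ∫ y, haarFun μ P w y * haarFun μ P w' y ∂μ =
      (1 / Real.sqrt ((μ (Cyl w)).toReal)) * (1 / Real.sqrt ((μ (Cyl w')).toReal)) *
        (Real.sqrt (P w.getLast! 1 / P w.getLast! 0) * Real.sqrt (P w'.getLast! 1 / P w'.getLast! 0)
            * (μ (Cyl (w ++ [0]) ∩ Cyl (w' ++ [0]))).toReal
          - Real.sqrt (P w.getLast! 1 / P w.getLast! 0) * Real.sqrt (P w'.getLast! 0 / P w'.getLast! 1)
            * (μ (Cyl (w ++ [0]) ∩ Cyl (w' ++ [1]))).toReal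
          - Real.sqrt (P w.getLast! 0 / P w.getLast! 1) * Real.sqrt (P w'.getLast! 1 / P w'.getLast! 0)
            * (μ (Cyl (w ++ [1]) ∩ Cyl (w' ++ [0]))).toReal
          + Real.sqrt (P w.getLast! 0 / P w.getLast! 1) * Real.sqrt (P w'.getLast! 0 / P w'.getLast! 1)
            * (μ (Cyl (w ++ [1]) ∩ Cyl (w' ++ [1]))).toReal) := by
  set c := (1 : ℝ) / Real.sqrt ((μ (Cyl w)).toReal) with hc
  set c' := (1 : ℝ) / Real.sqrt ((μ (Cyl w')).toReal) with hc'
  set a1 := Real.sqrt (P w.getLast! 1 / P w.getLast! 0) with ha1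
  set a0 := Real.sqrt (P w.getLast! 0 / P w.getLast! 1) with ha0
  set b1 := Real.sqrt (P w'.getLast! 1 / P w'.getLast! 0) with hb1
  set b0 := Real.sqrt (P w'.getLast! 0 / P w'.getLast! 1) with hb0
  have hind : ∀ (S T : Set (Omega 2)) (y : Omega 2),
      S.indicator (fun _ => (1:ℝ)) y * T.indicator (fun _ => (1:ℝ)) y
        = (S ∩ T).indicator (fun _ => (1:ℝ)) y := by
    intro S T y
    rw [← Set.inter_indicator_mul]
    simp
  have hpt : ∀ y, haarFun μ P w y * haarFun μ P w' y =
      (c * c' * (a1 * b1)) * (Cyl (w ++ [0]) ∩ Cyl (w' ++ [0])).indicator (fun _ => (1:ℝ)) y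
      - (c * c' * (a1 * b0)) * (Cyl (w ++ [0]) ∩ Cyl (w' ++ [1])).indicator (fun _ => (1:ℝ)) y
      - (c * c' * (a0 * b1)) * (Cyl (w ++ [1]) ∩ Cyl (w' ++ [0])).indicator (fun _ => (1:ℝ)) y
      + (c * c' * (a0 * b0)) * (Cyl (w ++ [1]) ∩ Cyl (w' ++ [1])).indicator (fun _ => (1:ℝ)) y := by
    intro y
    simp only [haarFun, ← hc, ← hc', ← ha1, ← ha0, ← hb1, ← hb0, ← hind]
    ring
  have hI : ∀ (U V : List (Fin 2)), Integrable ((Cyl U ∩ Cyl V).indicator (fun _ => (1:ℝ))) μ :=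
    fun U V => (integrable_const 1).indicator ((measurableSet_cyl U).inter (measurableSet_cyl V))
  have i00 := (hI (w ++ [0]) (w' ++ [0])).const_mul (c * c' * (a1 * b1))
  have i01 := (hI (w ++ [0]) (w' ++ [1])).const_mul (c * c' * (a1 * b0))
  have i10 := (hI (w ++ [1]) (w' ++ [0])).const_mul (c * c' * (a0 * b1))
  have i11 := (hI (w ++ [1]) (w' ++ [1])).const_mul (c * c' * (a0 * b0))
  have is1 : Integrable (fun y =>
      c * c' * (a1 * b1) * (Cyl (w ++ [0]) ∩ Cyl (w' ++ [0])).indicator (fun _ => (1:ℝ)) y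
      - c * c' * (a1 * b0) * (Cyl (w ++ [0]) ∩ Cyl (w' ++ [1])).indicator (fun _ => (1:ℝ)) y) μ :=
    i00.sub i01
  have is2 : Integrable (fun y =>
      (c * c' * (a1 * b1) * (Cyl (w ++ [0]) ∩ Cyl (w' ++ [0])).indicator (fun _ => (1:ℝ)) y
      - c * c' * (a1 * b0) * (Cyl (w ++ [0]) ∩ Cyl (w' ++ [1])).indicator (fun _ => (1:ℝ)) y)
      - c * c' * (a0 * b1) * (Cyl (w ++ [1]) ∩ Cyl (w' ++ [0])).indicator (fun _ => (1:ℝ)) y) μ :=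
    is1.sub i10
  simp_rw [hpt]
  rw [integral_add is2 i11, integral_sub is1 i10,
    integral_sub i00 i01, integral_const_mul, integral_const_mul, integral_const_mul,
    integral_const_mul,
    integral_indicator_const (1:ℝ) ((measurableSet_cyl (w ++ [0])).inter (measurableSet_cyl (w' ++ [0]))),
    integral_indicator_const (1:ℝ) ((measurableSet_cyl (w ++ [0])).inter (measurableSet_cyl (w' ++ [1]))),
    integral_indicator_const (1:ℝ) ((measurableSet_cyl (w ++ [1])).inter (measurableSet_cyl (w' ++ [0]))),
    integral_indicator_const (1:ℝ) ((measurableSet_cyl (w ++ [1])).inter (measurableSet_cyl (w' ++ [1])))]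
  simp only [smul_eq_mul, mul_one, measureReal_def]
  ring

lemma ortho_of_le (P : Fin 2 → Fin 2 → ℝ) (pi : Fin 2 → ℝ)
    (hP : ∀ i j, 0 < P i j)
    (μ : Measure (Omega 2)) (hprob : IsProbabilityMeasure μ)
    (hμ : ∀ w : List (Fin 2), (μ (Cyl w)).toReal = markovWeight pi P w)
    (w w' : List (Fin 2)) (hw' : w' ≠ []) (hlen : w.length ≤ w'.length)
    (hne : w ≠ w') :
    ∫ y, haarFun μ P w y * haarFun μ P w' y ∂μ = 0 := by
  haveI := hprob
  by_cases hag : ∀ i < w.length, w.getD i 0 = w'.getD i 0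
  · -- w is a (proper) prefix of w'
    have hlt : w.length < w'.length := by
      rcases lt_or_eq_of_le hlen with h | h
      · exact h
      · exfalso
        apply hne
        apply List.ext_getElem h
        intro n h1 h2
        have := hag n h1
        rwa [List.getD_eq_getElem _ _ h1, List.getD_eq_getElem _ _ h2] at this
    set cc := w'.getD w.length 0 with hcc
    have hpre : ∀ b : Fin 2, Cyl (w ++ [cc]) ∩ Cyl (w' ++ [b]) = Cyl (w' ++ [b]) := by
      intro b
      apply cyl_inter_of_prefix (by simp; omega)
      intro i hi
      simp only [List.length_append, List.length_cons, List.length_nil] at hi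
      rcases Nat.lt_or_ge i w.length with h | h
      · rw [List.getD_append _ _ _ _ h, List.getD_append _ _ _ _ (by omega), hag i h]
      · have hiw : i = w.length := by omega
        subst hiw
        rw [List.getD_append_right _ _ _ _ le_rfl, List.getD_append _ _ _ _ hlt]
        simp [hcc]
    have hempty : ∀ a b : Fin 2, a ≠ cc → Cyl (w ++ [a]) ∩ Cyl (w' ++ [b]) = ∅ := by
      intro a b hab
      apply cyl_inter_empty w.length (by simp) (by simp; omega)
      rw [List.getD_append_right _ _ _ _ le_rfl, List.getD_append _ _ _ _ hlt]
      intro hgd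
      apply hab
      rw [hcc]
      simpa using hgd
    have hkey : Real.sqrt (P w'.getLast! 1 / P w'.getLast! 0) * (μ (Cyl (w' ++ [0]))).toReal
        - Real.sqrt (P w'.getLast! 0 / P w'.getLast! 1) * (μ (Cyl (w' ++ [1]))).toReal = 0 := by
      rw [hμ, hμ, markovWeight_snoc pi P w' hw' 0, markovWeight_snoc pi P w' hw' 1]
      have h := sqrt_cancel (hP w'.getLast! 0) (hP w'.getLast! 1)
      linear_combination markovWeight pi P w' * h
    have hc0 : cc = 0 ∨ cc = 1 := by omega
    rcases hc0 with h | h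
    · have e00 := hpre 0; rw [h] at e00
      have e01 := hpre 1; rw [h] at e01
      have e10 := hempty 1 0 (by rw [h]; decide)
      have e11 := hempty 1 1 (by rw [h]; decide)
      rw [integral_haar_mul, e00, e01, e10, e11]
      simp only [measure_empty, ENNReal.toReal_zero, mul_zero, sub_zero, add_zero]
      linear_combination ((1 : ℝ) / Real.sqrt ((μ (Cyl w)).toReal)
        * ((1 : ℝ) / Real.sqrt ((μ (Cyl w')).toReal))
        * Real.sqrt (P w.getLast! 1 / P w.getLast! 0)) * hkey
    · have e10 := hpre 0; rw [h] at e10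
      have e11 := hpre 1; rw [h] at e11
      have e00 := hempty 0 0 (by rw [h]; decide)
      have e01 := hempty 0 1 (by rw [h]; decide)
      rw [integral_haar_mul, e00, e01, e10, e11]
      simp only [measure_empty, ENNReal.toReal_zero, mul_zero, sub_zero, add_zero]
      linear_combination (-((1 : ℝ) / Real.sqrt ((μ (Cyl w)).toReal)
        * ((1 : ℝ) / Real.sqrt ((μ (Cyl w')).toReal))
        * Real.sqrt (P w.getLast! 0 / P w.getLast! 1))) * hkey
  · -- the words disagree somewhere: all intersections are empty
    push_neg at hag
    obtain ⟨i, hi, hine⟩ := hag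
    have key : ∀ a b : Fin 2, Cyl (w ++ [a]) ∩ Cyl (w' ++ [b]) = ∅ := by
      intro a b
      apply cyl_inter_empty i (by simp; omega) (by simp; omega)
      rwa [List.getD_append _ _ _ _ hi, List.getD_append _ _ _ _ (lt_of_lt_of_le hi hlen)]
    rw [integral_haar_mul, key, key, key, key]
    simp

theorem haar_pairwise_orthogonal (P : Fin 2 → Fin 2 → ℝ) (pi : Fin 2 → ℝ)
    (hP : ∀ i j, 0 < P i j) (hrow : ∀ i, P i 0 + P i 1 = 1)
    (hpi : ∀ i, 0 < pi i) (hpisum : pi 0 + pi 1 = 1)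
    (hstat : ∀ j, pi 0 * P 0 j + pi 1 * P 1 j = pi j)
    (μ : Measure (Omega 2)) (hprob : IsProbabilityMeasure μ)
    (hμ : ∀ w : List (Fin 2), (μ (Cyl w)).toReal = markovWeight pi P w) :
    ∀ w w' : List (Fin 2), w ≠ [] → w' ≠ [] → w ≠ w' →
      ∫ y, haarFun μ P w y * haarFun μ P w' y ∂μ = 0 := by
  intro w w' hw hw' hne
  rcases le_total w.length w'.length with h | h
  · exact ortho_of_le P pi hP μ hprob hμ w w' hw' h hne
  · have h2 := ortho_of_le P pi hP μ hprob hμ w' w hw h (Ne.symm hne)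
    rw [show (fun y => haarFun μ P w y * haarFun μ P w' y)
        = fun y => haarFun μ P w' y * haarFun μ P w y from funext fun y => mul_comm _ _]
    exact h2
end

section
/- In the family of two-state Markov measures: there exist row-stochastic 2×2 positive matrices P^0, P^1, P^2 with stationary Markov measures μ0, μ1, μ2 and Jacobians J0, J1, J2 (J_j constant on two-cylinders, J_j(x) = P^j_{x_2,x_1}) such that ∫(log J0 - log J1)·((J2 - J0)/J0) dμ0 > 0 (the Second-Law condition) while the Pythagorean quantity ∫(log J1 - log J0) dμ0 + ∫(log J0 - log J1) dμ2 is strictly negative; i.e., the Second-Law condition does not imply the Pythagorean inequality D_KL(μ2,μ1) ≥ D_KL(μ2,μ0) + D_KL(μ0,μ1). In particular one may take P^0 with diagonal (0.2, 0.2), P^1 with diagonal (0.15, 0.92), P^2 with diagonal (0.9, 0.12). -/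
open MeasureTheory Real Filter

def JofP (P : Fin 2 → Fin 2 → ℝ) : Omega 2 → ℝ := fun x => P (x 1) (x 0)

def IsStochastic (P : Fin 2 → Fin 2 → ℝ) : Prop :=
  (∀ i j, 0 < P i j) ∧ ∀ i, P i 0 + P i 1 = 1

def IsStationaryFor (pi : Fin 2 → ℝ) (P : Fin 2 → Fin 2 → ℝ) : Prop :=
  (∀ i, 0 < pi i) ∧ pi 0 + pi 1 = 1 ∧ ∀ j, pi 0 * P 0 j + pi 1 * P 1 j = pi j

def IsMarkovMeasure (μ : Measure (Omega 2)) (pi : Fin 2 → ℝ)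
    (P : Fin 2 → Fin 2 → ℝ) : Prop :=
  IsProbabilityMeasure μ ∧ ∀ w : List (Fin 2), (μ (Cyl w)).toReal = markovWeight pi P w

namespace SLP

open ENNReal


abbrev NN : ℕ := 455700
abbrev Z := Fin NN
instance : BorelSpace Z := ⟨borel_eq_top_of_discrete.symm⟩
instance : IsTopologicalAddGroup Z :=
  { continuous_add := continuous_of_discreteTopology
    continuous_neg := continuous_of_discreteTopology }

abbrev G := ℕ → Z

noncomputable def K0 : TopologicalSpace.PositiveCompacts G :=
  ⟨⟨Set.univ, isCompact_univ⟩, by simp [interior_univ]⟩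

noncomputable def ν : Measure G := Measure.addHaarMeasure K0

instance : ν.IsAddLeftInvariant := Measure.isAddLeftInvariant_addHaarMeasure K0

lemma nu_univ : ν Set.univ = 1 := by
  have := Measure.addHaarMeasure_self (K₀ := K0)
  simpa [K0, ν] using this

instance : IsProbabilityMeasure ν := ⟨nu_univ⟩

def proj (n : ℕ) : G → (Fin n → Z) := fun u i => u i

lemma measurable_proj (n : ℕ) : Measurable (proj n) :=
  measurable_pi_lambda _ fun i => measurable_pi_apply _

lemma measurableSet_proj_preimage (n : ℕ) (S : Set (Fin n → Z)) :
    MeasurableSet (proj n ⁻¹' S) :=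
  (measurable_proj n) (S.toFinite.measurableSet)

open Fin.CommRing in
lemma nu_proj_singleton (n : ℕ) (v : Fin n → Z) :
    ν (proj n ⁻¹' {v}) = ((NN : ℝ≥0∞) ^ n)⁻¹ := by
  -- all singleton preimages have the same measure
  have key : ∀ v w : Fin n → Z, ν (proj n ⁻¹' {v}) = ν (proj n ⁻¹' {w}) := by
    intro v w
    set g : G := fun i => if h : i < n then v ⟨i, h⟩ - w ⟨i, h⟩ else 0 with hg
    have hpre : (fun h => g + h) ⁻¹' (proj n ⁻¹' {v}) = proj n ⁻¹' {w} := by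
      ext u
      simp only [Set.mem_preimage, Set.mem_singleton_iff, proj, funext_iff, Pi.add_apply]
      refine forall_congr' fun i => ?_
      rw [hg]
      simp only [dif_pos i.isLt, Fin.eta]
      constructor
      · intro h; linear_combination h
      · intro h; linear_combination h
    calc ν (proj n ⁻¹' {v}) = ν ((fun h => g + h) ⁻¹' (proj n ⁻¹' {v})) :=
          (measure_preimage_add ν g _).symm
      _ = ν (proj n ⁻¹' {w}) := by rw [hpre]
  -- they partition the space
  have hpart : (⋃ v : Fin n → Z, proj n ⁻¹' {v}) = Set.univ := by
    ext u; simp [proj]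
  have hdisj : Pairwise (Function.onFun Disjoint fun v : Fin n → Z => proj n ⁻¹' {v}) := by
    intro a b hab
    simp only [Function.onFun, Set.disjoint_left]
    intro u ha hb
    exact hab (ha.symm.trans hb)
  have hsum := measure_iUnion hdisj (fun v => measurableSet_proj_preimage n {v}) (μ := ν)
  rw [hpart, nu_univ, tsum_fintype] at hsum
  have hconst : ∀ w : Fin n → Z, ν (proj n ⁻¹' {w}) = ν (proj n ⁻¹' {v}) :=
    fun w => key w v
  rw [Finset.sum_congr rfl (fun w _ => hconst w), Finset.sum_const] at hsum
  have hcard : ((Finset.univ : Finset (Fin n → Z)).card : ℝ≥0∞) = (NN : ℝ≥0∞) ^ n := by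
    rw [Finset.card_univ, Fintype.card_fun, Fintype.card_fin, Fintype.card_fin, Nat.cast_pow]
  rw [nsmul_eq_mul, hcard] at hsum
  have hN : (NN : ℝ≥0∞) ^ n ≠ 0 := by positivity
  have hNt : (NN : ℝ≥0∞) ^ n ≠ ∞ := by
    exact ENNReal.pow_ne_top (ENNReal.natCast_ne_top NN)
  calc ν (proj n ⁻¹' {v}) = ((NN:ℝ≥0∞)^n)⁻¹ * ((NN:ℝ≥0∞)^n * ν (proj n ⁻¹' {v})) := by
        rw [← mul_assoc, ENNReal.inv_mul_cancel hN hNt, one_mul]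
    _ = ((NN:ℝ≥0∞)^n)⁻¹ := by rw [← hsum, mul_one]


lemma nu_proj_finset (n : ℕ) (S : Finset (Fin n → Z)) :
    ν (proj n ⁻¹' ↑S) = (S.card : ℝ≥0∞) * ((NN : ℝ≥0∞) ^ n)⁻¹ := by
  have hdecomp : proj n ⁻¹' ↑S = ⋃ v ∈ S, proj n ⁻¹' {v} := by
    ext u; simp
  rw [hdecomp, measure_biUnion_finset ?_ (fun v _ => measurableSet_proj_preimage n {v})]
  · rw [Finset.sum_congr rfl (fun v _ => nu_proj_singleton n v), Finset.sum_const,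
      nsmul_eq_mul]
  · intro a _ b _ hab
    simp only [Function.onFun, Set.disjoint_left]
    intro u ha hb
    exact hab (ha.symm.trans hb)

lemma nu_constraints (n : ℕ) (B : ℕ → Finset Z) :
    ν {u : G | ∀ i, i < n → u i ∈ B i} =
      ∏ i ∈ Finset.range n, ((B i).card : ℝ≥0∞) * ((NN : ℝ≥0∞))⁻¹ := by
  have hset : {u : G | ∀ i, i < n → u i ∈ B i} =
      proj n ⁻¹' ↑(Fintype.piFinset fun i : Fin n => B i) := by
    ext u
    simp only [Set.mem_setOf_eq, Set.mem_preimage, Finset.coe_sort_coe, Finset.mem_coe,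
      Fintype.mem_piFinset, proj]
    constructor
    · intro h i; exact h i i.isLt
    · intro h i hi; exact h ⟨i, hi⟩
  rw [hset, nu_proj_finset, Fintype.card_piFinset]
  rw [Finset.prod_mul_distrib, Finset.prod_const, Finset.card_range,
    ← ENNReal.inv_pow, Nat.cast_prod]
  congr 1
  exact (Finset.prod_range fun i => ((B i).card : ℝ≥0∞)).symm


/-! ### Coding -/

def initF (k : ℕ) : Z → Fin 2 := fun z => if (z : ℕ) < k then 0 else 1

def chain (k : ℕ) (ks : Fin 2 → ℕ) (u : G) : ℕ → Fin 2
  | 0 => initF k (u 0)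
  | n+1 => initF (ks (chain k ks u n)) (u (n+1))

def code (k : ℕ) (ks : Fin 2 → ℕ) : G → Omega 2 := fun u n => chain k ks u n

lemma measurable_chain (k : ℕ) (ks : Fin 2 → ℕ) (n : ℕ) :
    Measurable (fun u => chain k ks u n) := by
  induction n with
  | zero => exact (measurable_of_countable (initF k)).comp (measurable_pi_apply 0)
  | succ n ih =>
    have : (fun u => chain k ks u (n+1)) =
        (fun p : Fin 2 × Z => initF (ks p.1) p.2) ∘ (fun u => (chain k ks u n, u (n+1))) := rfl
    rw [this]
    exact (measurable_of_countable _).comp (ih.prodMk (measurable_pi_apply _))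

lemma measurable_code (k : ℕ) (ks : Fin 2 → ℕ) : Measurable (code k ks) :=
  measurable_pi_lambda _ (measurable_chain k ks)

lemma chain_eq_iff (k : ℕ) (ks : Fin 2 → ℕ) (u : G) (w : ℕ → Fin 2) (n : ℕ) :
    (∀ i, i ≤ n → chain k ks u i = w i) ↔
      (initF k (u 0) = w 0 ∧ ∀ i, i < n → initF (ks (w i)) (u (i+1)) = w (i+1)) := by
  induction n with
  | zero =>
    constructor
    · intro h
      exact ⟨h 0 le_rfl, fun i hi => absurd hi (Nat.not_lt_zero i)⟩
    · intro h i hi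
      interval_cases i
      exact h.1
  | succ n ih =>
    constructor
    · intro h
      have h' := ih.mp (fun i hi => h i (hi.trans (Nat.le_succ n)))
      refine ⟨h'.1, fun i hi => ?_⟩
      by_cases hieq : i = n
      · subst hieq
        have hn : chain k ks u i = w i := h i (Nat.le_succ i)
        have hsn := h (i+1) le_rfl
        rw [show chain k ks u (i+1) = initF (ks (chain k ks u i)) (u (i+1)) from rfl, hn] at hsn
        exact hsn
      · exact h'.2 i (by omega)
    · intro h i hi
      by_cases hieq : i = n + 1
      · subst hieq
        have hn : chain k ks u n = w n :=
          ih.mpr ⟨h.1, fun j hj => h.2 j (hj.trans (Nat.lt_succ_self n))⟩ n le_rfl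
        rw [show chain k ks u (n+1) = initF (ks (chain k ks u n)) (u (n+1)) from rfl, hn]
        exact h.2 n (Nat.lt_succ_self n)
      · exact ih.mpr ⟨h.1, fun j hj => h.2 j (hj.trans (Nat.lt_succ_self n))⟩ i (by omega)

/-! ### Counting -/

lemma card_filter_lt (k : ℕ) (hk : k ≤ NN) :
    (Finset.univ.filter fun z : Z => (z : ℕ) < k).card = k := by
  rw [← Finset.card_range k]
  apply Finset.card_bij (fun (z : Z) _ => (z : ℕ))
  · intro a ha
    simp only [Finset.mem_filter] at ha
    simpa using ha.2
  · intro a _ b _ hab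
    exact Fin.val_injective hab
  · intro b hb
    have hb' : b < k := Finset.mem_range.mp hb
    exact ⟨⟨b, lt_of_lt_of_le hb' hk⟩, by simp [hb'], rfl⟩

lemma card_initF_zero (k : ℕ) (hk : k ≤ NN) :
    (Finset.univ.filter fun z : Z => initF k z = 0).card = k := by
  have heq : Finset.univ.filter (fun z : Z => initF k z = 0) =
      Finset.univ.filter (fun z : Z => (z : ℕ) < k) := by
    apply Finset.filter_congr
    intro z _
    simp only [initF]
    split_ifs with h <;> simp [h]
  rw [heq]
  exact card_filter_lt k hk

lemma card_initF_one (k : ℕ) (hk : k ≤ NN) :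
    (Finset.univ.filter fun z : Z => initF k z = 1).card = NN - k := by
  have heq : Finset.univ.filter (fun z : Z => initF k z = 1) =
      Finset.univ.filter (fun z : Z => ¬ ((z : ℕ) < k)) := by
    apply Finset.filter_congr
    intro z _
    simp only [initF]
    split_ifs with h <;> simp [h]
  have h2 := Finset.card_filter_add_card_filter_not
    (s := (Finset.univ : Finset Z)) (p := fun z : Z => (z : ℕ) < k)
  rw [card_filter_lt k hk] at h2
  have h3 : (Finset.univ : Finset Z).card = NN := by rw [Finset.card_univ, Fintype.card_fin]
  rw [heq]
  omega


/-! ### The Markov measure -/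

noncomputable def muOf (k : ℕ) (ks : Fin 2 → ℕ) : Measure (Omega 2) :=
  Measure.map (code k ks) ν

lemma measurableSet_cyl (w : List (Fin 2)) : MeasurableSet (Cyl w) := by
  have : Cyl w = ⋂ (i : ℕ) (_ : i < w.length), (fun x : Omega 2 => x i) ⁻¹' {w.getD i 0} := by
    ext x; simp [Cyl]
  rw [this]
  exact MeasurableSet.iInter fun i => MeasurableSet.iInter fun _ =>
    (measurable_pi_apply i) (measurableSet_singleton _)

instance muOf_prob (k : ℕ) (ks : Fin 2 → ℕ) : IsProbabilityMeasure (muOf k ks) :=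
  Measure.isProbabilityMeasure_map (measurable_code k ks).aemeasurable

lemma chainProd_eq (P : Fin 2 → Fin 2 → ℝ) (a : Fin 2) (t : List (Fin 2)) :
    chainProd P a t =
      ∏ j ∈ Finset.range t.length, P ((a :: t).getD j 0) ((a :: t).getD (j+1) 0) := by
  induction t generalizing a with
  | nil => simp [chainProd]
  | cons b t ih =>
    rw [show chainProd P a (b :: t) = P a b * chainProd P b t from rfl, ih b,
      List.length_cons, Finset.prod_range_succ']
    simp only [List.getD_cons_succ, List.getD_cons_zero]
    ring

lemma markov_cyl (k : ℕ) (ks : Fin 2 → ℕ) (pi : Fin 2 → ℝ) (P : Fin 2 → Fin 2 → ℝ)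
    (hpi : ∀ a, pi a = ((Finset.univ.filter fun z : Z => initF k z = a).card : ℝ) / NN)
    (hP : ∀ i j, P i j = ((Finset.univ.filter fun z : Z => initF (ks i) z = j).card : ℝ) / NN)
    (w : List (Fin 2)) :
    ((muOf k ks) (Cyl w)).toReal = markovWeight pi P w := by
  rw [muOf, Measure.map_apply (measurable_code k ks) (measurableSet_cyl w)]
  cases w with
  | nil =>
    have : Cyl [] = Set.univ := by ext x; simp [Cyl]
    rw [this]
    simp [markovWeight, nu_univ]
  | cons a t =>
    set n := t.length + 1 with hn
    set wf : ℕ → Fin 2 := fun i => (a :: t).getD i 0 with hwf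
    set B : ℕ → Finset Z := fun i => match i with
      | 0 => Finset.univ.filter fun z => initF k z = wf 0
      | (j+1) => Finset.univ.filter fun z => initF (ks (wf j)) z = wf (j+1)
      with hB
    have hset : code k ks ⁻¹' Cyl (a :: t) = {u : G | ∀ i, i < n → u i ∈ B i} := by
      ext u
      simp only [Set.mem_preimage, Cyl, Set.mem_setOf_eq, code]
      constructor
      · intro h
        have hiff := (chain_eq_iff k ks u wf t.length).mp (fun i hi => h i (by rw [List.length_cons]; omega))
        intro i hi
        match i with
        | 0 => simpa [hB] using hiff.1
        | (j+1) => simpa [hB] using hiff.2 j (by omega)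
      · intro h i hi
        refine (chain_eq_iff k ks u wf t.length).mpr ⟨?_, ?_⟩ i (by rw [List.length_cons] at hi; omega)
        · simpa [hB] using h 0 (by omega)
        · intro j hj
          simpa [hB] using h (j+1) (by omega)
    rw [hset, nu_constraints n B, ENNReal.toReal_prod]
    have hfac : ∀ i ∈ Finset.range n,
        (((B i).card : ℝ≥0∞) * ((NN : ℝ≥0∞))⁻¹).toReal = ((B i).card : ℝ) / NN := by
      intro i _
      rw [ENNReal.toReal_mul, ENNReal.toReal_natCast, ENNReal.toReal_inv, ENNReal.toReal_natCast, div_eq_mul_inv]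
    rw [Finset.prod_congr rfl hfac, hn, Finset.prod_range_succ']
    have h0 : ((B 0).card : ℝ) / NN = pi a := by
      rw [hpi a, hB]
      rfl
    have hstep : ∀ j ∈ Finset.range t.length,
        ((B (j+1)).card : ℝ) / NN = P (wf j) (wf (j+1)) := by
      intro j _
      rw [hP, hB]
    rw [Finset.prod_congr rfl hstep, h0]
    show (∏ j ∈ Finset.range t.length, P ((a::t).getD j 0) ((a::t).getD (j+1) 0)) * pi a
        = markovWeight pi P (a :: t)
    rw [show markovWeight pi P (a :: t) = pi a * chainProd P a t from rfl, chainProd_eq]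
    ring


/-! ### Integrals of two-coordinate functions -/

lemma mem_cyl_pair (a b : Fin 2) (x : Omega 2) : x ∈ Cyl [a, b] ↔ x 0 = a ∧ x 1 = b := by
  constructor
  · intro h
    exact ⟨h 0 (by norm_num), h 1 (by norm_num)⟩
  · rintro ⟨h0, h1⟩ i hi
    simp only [List.length_cons, List.length_nil] at hi
    interval_cases i
    · simpa using h0
    · simpa using h1

lemma integral_pair (μ : Measure (Omega 2)) (pi : Fin 2 → ℝ) (P : Fin 2 → Fin 2 → ℝ)
    (hw : ∀ w, (μ (Cyl w)).toReal = markovWeight pi P w) (F : Fin 2 → Fin 2 → ℝ) :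
    ∫ x, F (x 0) (x 1) ∂μ = ∑ a : Fin 2, ∑ b : Fin 2, pi a * P a b * F a b := by
  classical
  have h2 : ∀ i : Fin 2, i = 0 ∨ i = 1 := by decide
  have hfun : ∀ x : Omega 2, F (x 0) (x 1) =
      ∑ a : Fin 2, ∑ b : Fin 2, Set.indicator (Cyl [a, b]) (fun _ => F a b) x := by
    intro x
    have hid : ∀ a b : Fin 2, Set.indicator (Cyl [a, b]) (fun _ => F a b) x =
        if x 0 = a ∧ x 1 = b then F a b else 0 := by
      intro a b
      rw [Set.indicator_apply]
      exact if_congr (mem_cyl_pair a b x) rfl rfl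
    simp only [hid, Fin.sum_univ_two]
    rcases h2 (x 0) with h0 | h0 <;> rcases h2 (x 1) with h1 | h1 <;>
      simp [h0, h1]
  have hint : ∀ a b : Fin 2, Integrable (Set.indicator (Cyl [a, b]) fun _ => F a b) μ := by
    intro a b
    have hfin : IsFiniteMeasure μ := by
      constructor
      by_contra h
      rw [not_lt, top_le_iff] at h
      have hcyl : Cyl [] = Set.univ := by ext y; simp [Cyl]
      have h1 := hw []
      rw [hcyl, h, ENNReal.toReal_top] at h1
      simp [markovWeight] at h1
    exact (integrable_const (F a b)).indicator (measurableSet_cyl _)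
  calc ∫ x, F (x 0) (x 1) ∂μ
      = ∫ x, ∑ a : Fin 2, ∑ b : Fin 2, Set.indicator (Cyl [a, b]) (fun _ => F a b) x ∂μ := by
        exact integral_congr_ae (Filter.Eventually.of_forall hfun)
    _ = ∑ a : Fin 2, ∑ b : Fin 2, ∫ x, Set.indicator (Cyl [a, b]) (fun _ => F a b) x ∂μ := by
        rw [integral_finset_sum _ (fun a _ => integrable_finset_sum _ (fun b _ => hint a b))]
        exact Finset.sum_congr rfl fun a _ => integral_finset_sum _ (fun b _ => hint a b)
    _ = ∑ a : Fin 2, ∑ b : Fin 2, pi a * P a b * F a b := by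
        refine Finset.sum_congr rfl fun a _ => Finset.sum_congr rfl fun b _ => ?_
        rw [integral_indicator_const _ (measurableSet_cyl _), measureReal_def, hw [a, b]]
        simp only [markovWeight, chainProd, smul_eq_mul]
        ring


/-! ### Concrete data -/

noncomputable def PP0 : Fin 2 → Fin 2 → ℝ := ![![0.2, 0.8], ![0.8, 0.2]]
noncomputable def PP1 : Fin 2 → Fin 2 → ℝ := ![![0.15, 0.85], ![0.08, 0.92]]
noncomputable def PP2 : Fin 2 → Fin 2 → ℝ := ![![0.9, 0.1], ![0.88, 0.12]]
noncomputable def pp0 : Fin 2 → ℝ := ![1/2, 1/2]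
noncomputable def pp1 : Fin 2 → ℝ := ![8/93, 85/93]
noncomputable def pp2 : Fin 2 → ℝ := ![44/49, 5/49]

lemma hpi_of (k : ℕ) (hk : k ≤ NN) (pi : Fin 2 → ℝ)
    (h0 : pi 0 = (k : ℝ) / NN) (h1 : pi 1 = ((NN - k : ℕ) : ℝ) / NN) :
    ∀ a, pi a = ((Finset.univ.filter fun z : Z => initF k z = a).card : ℝ) / NN := by
  intro a
  have hfa : ∀ y : Fin 2, y = 0 ∨ y = 1 := by decide
  rcases hfa a with rfl | rfl
  · rw [card_initF_zero k hk]; exact h0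
  · rw [card_initF_one k hk]; exact h1

lemma hP_of (ks : Fin 2 → ℕ) (hks : ∀ i, ks i ≤ NN) (P : Fin 2 → Fin 2 → ℝ)
    (h0 : ∀ i, P i 0 = (ks i : ℝ) / NN) (h1 : ∀ i, P i 1 = ((NN - ks i : ℕ) : ℝ) / NN) :
    ∀ i j, P i j = ((Finset.univ.filter fun z : Z => initF (ks i) z = j).card : ℝ) / NN := by
  intro i j
  have hfa : ∀ y : Fin 2, y = 0 ∨ y = 1 := by decide
  rcases hfa j with rfl | rfl
  · rw [card_initF_zero _ (hks i)]; exact h0 i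
  · rw [card_initF_one _ (hks i)]; exact h1 i

lemma hw0 : ∀ w, ((muOf 227850 ![91140, 364560]) (Cyl w)).toReal = markovWeight pp0 PP0 w :=
  markov_cyl _ _ _ _
    (hpi_of 227850 (by norm_num) pp0 (by norm_num [pp0]) (by norm_num [pp0]))
    (hP_of ![91140, 364560] (by intro i; fin_cases i <;> norm_num) PP0
      (by intro i; fin_cases i <;> norm_num [PP0])
      (by intro i; fin_cases i <;> norm_num [PP0]))

lemma hw1 : ∀ w, ((muOf 39200 ![68355, 36456]) (Cyl w)).toReal = markovWeight pp1 PP1 w :=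
  markov_cyl _ _ _ _
    (hpi_of 39200 (by norm_num) pp1 (by norm_num [pp1]) (by norm_num [pp1]))
    (hP_of ![68355, 36456] (by intro i; fin_cases i <;> norm_num) PP1
      (by intro i; fin_cases i <;> norm_num [PP1])
      (by intro i; fin_cases i <;> norm_num [PP1]))

lemma hw2 : ∀ w, ((muOf 409200 ![410130, 401016]) (Cyl w)).toReal = markovWeight pp2 PP2 w :=
  markov_cyl _ _ _ _
    (hpi_of 409200 (by norm_num) pp2 (by norm_num [pp2]) (by norm_num [pp2]))
    (hP_of ![410130, 401016] (by intro i; fin_cases i <;> norm_num) PP2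
      (by intro i; fin_cases i <;> norm_num [PP2])
      (by intro i; fin_cases i <;> norm_num [PP2]))

/-! ### Numerics -/

lemma log_ge_one_sub_inv {x : ℝ} (hx : 0 < x) : 1 - 1/x ≤ Real.log x := by
  have h := Real.log_le_sub_one_of_pos (show (0:ℝ) < 1/x by positivity)
  rw [one_div, Real.log_inv] at h
  rw [one_div]
  linarith

lemma num1 : (0:ℝ) < ∑ a : Fin 2, ∑ b : Fin 2, pp0 a * PP0 a b *
    ((Real.log (PP0 b a) - Real.log (PP1 b a)) * ((PP2 b a - PP0 b a) / PP0 b a)) := by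
  have f1 : Real.log 0.15 < Real.log 0.2 := Real.log_lt_log (by norm_num) (by norm_num)
  have f2 : Real.log 0.08 < Real.log 0.8 := Real.log_lt_log (by norm_num) (by norm_num)
  have f3 : Real.log 0.8 < Real.log 0.85 := Real.log_lt_log (by norm_num) (by norm_num)
  have f4 : Real.log 0.2 < Real.log 0.92 := Real.log_lt_log (by norm_num) (by norm_num)
  simp only [Fin.sum_univ_two, pp0, PP0, PP1, PP2, Matrix.cons_val_zero, Matrix.cons_val_one,
    Matrix.head_cons]
  nlinarith [f1, f2, f3, f4]

lemma num2 :
    (∑ a : Fin 2, ∑ b : Fin 2, pp0 a * PP0 a b * (Real.log (PP1 b a) - Real.log (PP0 b a))) +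
    (∑ a : Fin 2, ∑ b : Fin 2, pp2 a * PP2 a b * (Real.log (PP0 b a) - Real.log (PP1 b a))) < 0 := by
  have e1 : Real.log 0.2 - Real.log 0.15 = Real.log 2 - Real.log 1.5 := by
    rw [← Real.log_div (by norm_num) (by norm_num), ← Real.log_div (by norm_num) (by norm_num)]
    norm_num
  have e2 : Real.log 0.8 - Real.log 0.08 = 3 * Real.log 2 + Real.log 1.25 := by
    rw [← Real.log_div (by norm_num) (by norm_num),
      show (0.8:ℝ)/0.08 = 2^3 * 1.25 by norm_num,
      Real.log_mul (by norm_num) (by norm_num), Real.log_pow]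
    push_cast; ring
  have e3 : Real.log 0.85 - Real.log 0.8 = Real.log 1.0625 := by
    rw [← Real.log_div (by norm_num) (by norm_num)]
    norm_num
  have e4 : Real.log 0.92 - Real.log 0.2 = 2 * Real.log 2 + Real.log 1.15 := by
    rw [← Real.log_div (by norm_num) (by norm_num),
      show (0.92:ℝ)/0.2 = 2^2 * 1.15 by norm_num,
      Real.log_mul (by norm_num) (by norm_num), Real.log_pow]
    push_cast; ring
  have b1 : (1:ℝ)/3 ≤ Real.log 1.5 := by
    have := log_ge_one_sub_inv (show (0:ℝ) < 1.5 by norm_num)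
    norm_num at this
    linarith
  have b2 : (1:ℝ)/5 ≤ Real.log 1.25 := by
    have := log_ge_one_sub_inv (show (0:ℝ) < 1.25 by norm_num)
    norm_num at this
    linarith
  have b3 : Real.log 1.0625 ≤ 0.0625 := by
    have := Real.log_le_sub_one_of_pos (show (0:ℝ) < 1.0625 by norm_num)
    linarith
  have b4 : Real.log 1.15 ≤ 0.15 := by
    have := Real.log_le_sub_one_of_pos (show (0:ℝ) < 1.15 by norm_num)
    linarith
  have l2u : Real.log 2 < 0.6931471808 := Real.log_two_lt_d9
  have l2l : (0.6931471803:ℝ) < Real.log 2 := Real.log_two_gt_d9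
  simp only [Fin.sum_univ_two, pp0, pp2, PP0, PP1, PP2, Matrix.cons_val_zero, Matrix.cons_val_one,
    Matrix.head_cons]
  linarith [e1, e2, e3, e4, b1, b2, b3, b4, l2u, l2l]

end SLP

open SLP

theorem secondLaw_does_not_imply_pythagorean :
    ∃ (P0 P1 P2 : Fin 2 → Fin 2 → ℝ) (pi0 pi1 pi2 : Fin 2 → ℝ)
      (μ0 μ1 μ2 : Measure (Omega 2)),
      IsStochastic P0 ∧ IsStochastic P1 ∧ IsStochastic P2 ∧
      IsStationaryFor pi0 P0 ∧ IsStationaryFor pi1 P1 ∧ IsStationaryFor pi2 P2 ∧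
      IsMarkovMeasure μ0 pi0 P0 ∧ IsMarkovMeasure μ1 pi1 P1 ∧ IsMarkovMeasure μ2 pi2 P2 ∧
      P0 0 0 = 0.2 ∧ P0 1 1 = 0.2 ∧ P1 0 0 = 0.15 ∧ P1 1 1 = 0.92 ∧
      P2 0 0 = 0.9 ∧ P2 1 1 = 0.12 ∧
      (0 < ∫ x, (Real.log (JofP P0 x) - Real.log (JofP P1 x)) *
          ((JofP P2 x - JofP P0 x) / JofP P0 x) ∂μ0) ∧
      ((∫ x, (Real.log (JofP P1 x) - Real.log (JofP P0 x)) ∂μ0) +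
          (∫ x, (Real.log (JofP P0 x) - Real.log (JofP P1 x)) ∂μ2) < 0) := by
  refine ⟨PP0, PP1, PP2, pp0, pp1, pp2,
    muOf 227850 ![91140, 364560], muOf 39200 ![68355, 36456],
    muOf 409200 ![410130, 401016],
    ⟨by intro i j; fin_cases i <;> fin_cases j <;> norm_num [PP0],
     by intro i; fin_cases i <;> norm_num [PP0]⟩,
    ⟨by intro i j; fin_cases i <;> fin_cases j <;> norm_num [PP1],
     by intro i; fin_cases i <;> norm_num [PP1]⟩,
    ⟨by intro i j; fin_cases i <;> fin_cases j <;> norm_num [PP2],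
     by intro i; fin_cases i <;> norm_num [PP2]⟩,
    ⟨by intro i; fin_cases i <;> norm_num [pp0],
     by norm_num [pp0],
     by intro j; fin_cases j <;> norm_num [pp0, PP0]⟩,
    ⟨by intro i; fin_cases i <;> norm_num [pp1],
     by norm_num [pp1],
     by intro j; fin_cases j <;> norm_num [pp1, PP1]⟩,
    ⟨by intro i; fin_cases i <;> norm_num [pp2],
     by norm_num [pp2],
     by intro j; fin_cases j <;> norm_num [pp2, PP2]⟩,
    ⟨muOf_prob _ _, hw0⟩, ⟨muOf_prob _ _, hw1⟩, ⟨muOf_prob _ _, hw2⟩,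
    by norm_num [PP0], by norm_num [PP0], by norm_num [PP1], by norm_num [PP1],
    by norm_num [PP2], by norm_num [PP2], ?_, ?_⟩
  · have hI : (∫ x, (Real.log (JofP PP0 x) - Real.log (JofP PP1 x)) *
        ((JofP PP2 x - JofP PP0 x) / JofP PP0 x) ∂(muOf 227850 ![91140, 364560])) =
        ∑ a : Fin 2, ∑ b : Fin 2, pp0 a * PP0 a b *
          ((Real.log (PP0 b a) - Real.log (PP1 b a)) * ((PP2 b a - PP0 b a) / PP0 b a)) :=
      integral_pair _ pp0 PP0 hw0
        (fun a b => (Real.log (PP0 b a) - Real.log (PP1 b a)) *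
          ((PP2 b a - PP0 b a) / PP0 b a))
    rw [hI]
    exact num1
  · have hI0 : (∫ x, (Real.log (JofP PP1 x) - Real.log (JofP PP0 x))
        ∂(muOf 227850 ![91140, 364560])) =
        ∑ a : Fin 2, ∑ b : Fin 2, pp0 a * PP0 a b *
          (Real.log (PP1 b a) - Real.log (PP0 b a)) :=
      integral_pair _ pp0 PP0 hw0
        (fun a b => Real.log (PP1 b a) - Real.log (PP0 b a))
    have hI2 : (∫ x, (Real.log (JofP PP0 x) - Real.log (JofP PP1 x))
        ∂(muOf 409200 ![410130, 401016])) =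
        ∑ a : Fin 2, ∑ b : Fin 2, pp2 a * PP2 a b *
          (Real.log (PP0 b a) - Real.log (PP1 b a)) :=
      integral_pair _ pp2 PP2 hw2
        (fun a b => Real.log (PP0 b a) - Real.log (PP1 b a))
    rw [hI0, hI2]
    exact num2
end
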